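/- For every natural number n ≥ 5, the alternating group A_n is generated by the 3-cycles of the form (1, i, i+2) for i ∈ {2, ..., n-2}. -/

import Mathlib

open Fin.NatCast

open Equiv Equiv.Perm

variable {α : Type*} [DecidableEq α]

def c3 (a b c : α) : Equiv.Perm α := Equiv.swap a b * Equiv.swap b c

lemma c3_a {a b c : α} (hab : a ≠ b) (hac : a ≠ c) : c3 a b c a = b := by
  simp [c3, swap_apply_of_ne_of_ne hab hac]

lemma c3_b {a b c : α} (hac : a ≠ c) (hbc : b ≠ c) : c3 a b c b = c := by
  simp [c3, swap_apply_of_ne_of_ne hac.symm hbc.symm]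

lemma c3_c {a b c : α} (hbc : b ≠ c) : c3 a b c c = a := by
  simp [c3, hbc]

lemma c3_ne {a b c x : α} (ha : x ≠ a) (hb : x ≠ b) (hc : x ≠ c) : c3 a b c x = x := by
  simp [c3, swap_apply_of_ne_of_ne, ha, hb, hc]

lemma c3_inv (a b c : α) : (c3 a b c)⁻¹ = c3 c b a := by
  simp [c3, mul_inv_rev, swap_comm c b, swap_comm b a]

lemma c3_sign [Fintype α] {a b c : α} (hab : a ≠ b) (hbc : b ≠ c) :
    Equiv.Perm.sign (c3 a b c) = 1 := by
  simp [c3, sign_swap, hab, hbc]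

lemma c3_conj (σ : Equiv.Perm α) (a b c : α) :
    σ * c3 a b c * σ⁻¹ = c3 (σ a) (σ b) (σ c) := by
  simp only [c3, swap_apply_apply]; group

lemma c3_ext {a b c : α} (hab : a ≠ b) (hbc : b ≠ c) (hac : a ≠ c) (x : α) :
    c3 a b c x = if x = a then b else if x = b then c else if x = c then a else x := by
  split_ifs with h1 h2 h3 <;> subst_vars
  · exact c3_a hab hac
  · exact c3_b hac hbc
  · exact c3_c hbc
  · exact c3_ne h1 h2 h3

lemma c3_rot {a b c : α} (hab : a ≠ b) (hbc : b ≠ c) (hac : a ≠ c) :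
    c3 a b c = c3 b c a := by
  ext x
  rw [c3_ext hab hbc hac, c3_ext hbc hac.symm hab.symm]
  split_ifs <;> simp_all

lemma c3_decomp {d a b c : α} (hda : d ≠ a) (hdb : d ≠ b) (hdc : d ≠ c)
    (hab : a ≠ b) (hbc : b ≠ c) (hac : a ≠ c) :
    c3 d a b * c3 d b c = c3 a b c := by
  ext x
  simp only [Equiv.Perm.mul_apply, c3_ext hdb hbc hdc, c3_ext hab hbc hac,
    c3_ext hda hab hdb]
  split_ifs <;> simp_all

lemma c3_trans {d a b c : α} (hda : d ≠ a) (hdb : d ≠ b) (hdc : d ≠ c)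
    (hab : a ≠ b) (hbc : b ≠ c) (hac : a ≠ c) :
    c3 d a b * c3 d c a = c3 d c b := by
  ext x
  simp only [Equiv.Perm.mul_apply, c3_ext hdc hac.symm hda, c3_ext hda hab hdb,
    c3_ext hdc hbc.symm hdb]
  split_ifs <;> simp_all

/-! ### The generating set -/

def genSet (n : ℕ) : Set (Equiv.Perm (Fin (n + 1))) :=
  { c : Equiv.Perm (Fin (n + 1)) |
    ∃ i : ℕ, 2 ≤ i ∧ i + 2 ≤ n ∧
      c 1 = (i : Fin (n + 1)) ∧ c (i : Fin (n + 1)) = ((i + 2 : ℕ) : Fin (n + 1)) ∧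
      c ((i + 2 : ℕ) : Fin (n + 1)) = 1 ∧
      ∀ x : Fin (n + 1), x ≠ 1 → x ≠ (i : Fin (n + 1)) →
        x ≠ ((i + 2 : ℕ) : Fin (n + 1)) → c x = x }

variable {n : ℕ}

lemma vcast {a : ℕ} (h : a ≤ n) : ((a : Fin (n + 1)) : ℕ) = a :=
  Fin.val_cast_of_lt (Nat.lt_succ_of_le h)

lemma cast_ne {a b : ℕ} (ha : a ≤ n) (hb : b ≤ n) (h : a ≠ b) :
    (a : Fin (n + 1)) ≠ (b : Fin (n + 1)) := by
  intro e
  apply_fun Fin.val at e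
  rw [vcast ha, vcast hb] at e
  exact h e

lemma val_one' : ((1 : Fin (n + 1)) : ℕ) = 1 % (n + 1) := rfl

lemma one_ne_c {a : ℕ} (h2 : 2 ≤ a) (hn' : a ≤ n) :
    (1 : Fin (n + 1)) ≠ (a : Fin (n + 1)) := by
  intro e
  apply_fun Fin.val at e
  rw [val_one', vcast hn'] at e
  have : 1 % (n + 1) = 1 := Nat.mod_eq_of_lt (by omega)
  omega

lemma zero_ne_c {a : ℕ} (h1 : 1 ≤ a) (hn' : a ≤ n) :
    (0 : Fin (n + 1)) ≠ (a : Fin (n + 1)) := by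
  intro e
  apply_fun Fin.val at e
  rw [Fin.val_zero, vcast hn'] at e
  omega

lemma fin_zero_ne_one (hn : 1 ≤ n) : (0 : Fin (n + 1)) ≠ 1 := by
  intro e
  apply_fun Fin.val at e
  rw [Fin.val_zero, val_one'] at e
  have : 1 % (n + 1) = 1 := Nat.mod_eq_of_lt (by omega)
  omega

lemma gen_eq {c : Equiv.Perm (Fin (n + 1))} (hc : c ∈ genSet n) :
    ∃ i : ℕ, 2 ≤ i ∧ i + 2 ≤ n ∧
      c = c3 (1 : Fin (n + 1)) (i : Fin (n + 1)) ((i + 2 : ℕ) : Fin (n + 1)) := by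
  obtain ⟨i, h2, hin, h1, hi, hi2, hfix⟩ := hc
  have d1i : (1 : Fin (n + 1)) ≠ (i : Fin (n + 1)) := one_ne_c h2 (by omega)
  have d1i2 : (1 : Fin (n + 1)) ≠ ((i + 2 : ℕ) : Fin (n + 1)) := one_ne_c (by omega) (by omega)
  have dii2 : (i : Fin (n + 1)) ≠ ((i + 2 : ℕ) : Fin (n + 1)) :=
    cast_ne (by omega) (by omega) (by omega)
  refine ⟨i, h2, hin, ?_⟩
  ext x
  by_cases hx1 : x = 1
  · subst hx1; rw [h1, c3_a d1i d1i2]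
  by_cases hxi : x = (i : Fin (n + 1))
  · subst hxi; rw [hi, c3_b d1i2 dii2]
  by_cases hxi2 : x = ((i + 2 : ℕ) : Fin (n + 1))
  · subst hxi2; rw [hi2, c3_c dii2]
  · rw [hfix x hx1 hxi hxi2, c3_ne hx1 hxi hxi2]

lemma gen_mem {i : ℕ} (h2 : 2 ≤ i) (hin : i + 2 ≤ n) :
    c3 (1 : Fin (n + 1)) (i : Fin (n + 1)) ((i + 2 : ℕ) : Fin (n + 1)) ∈ genSet n := by
  have d1i : (1 : Fin (n + 1)) ≠ (i : Fin (n + 1)) := one_ne_c h2 (by omega)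
  have d1i2 : (1 : Fin (n + 1)) ≠ ((i + 2 : ℕ) : Fin (n + 1)) := one_ne_c (by omega) (by omega)
  have dii2 : (i : Fin (n + 1)) ≠ ((i + 2 : ℕ) : Fin (n + 1)) :=
    cast_ne (by omega) (by omega) (by omega)
  exact ⟨i, h2, hin, c3_a d1i d1i2, c3_b d1i2 dii2, c3_c dii2,
    fun x hx1 hxi hxi2 => c3_ne hx1 hxi hxi2⟩

/-! ### The key membership lemmas -/

lemma edge_mem (hn : 5 ≤ n) {i : ℕ} (h2 : 2 ≤ i) (hin : i + 2 ≤ n) :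
    c3 (1 : Fin (n + 1)) (i : Fin (n + 1)) ((i + 2 : ℕ) : Fin (n + 1)) ∈
      Subgroup.closure (genSet n) :=
  Subgroup.subset_closure (gen_mem h2 hin)

lemma P_symm {a b : ℕ} (h2a : 2 ≤ a) (han : a ≤ n) (h2b : 2 ≤ b) (hbn : b ≤ n) (hab : a ≠ b)
    (hP : c3 (1 : Fin (n + 1)) (a : Fin (n + 1)) (b : Fin (n + 1)) ∈
      Subgroup.closure (genSet n)) :
    c3 (1 : Fin (n + 1)) (b : Fin (n + 1)) (a : Fin (n + 1)) ∈ Subgroup.closure (genSet n) := by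
  have d1a : (1 : Fin (n + 1)) ≠ (a : Fin (n + 1)) := one_ne_c h2a han
  have d1b : (1 : Fin (n + 1)) ≠ (b : Fin (n + 1)) := one_ne_c h2b hbn
  have dab : (a : Fin (n + 1)) ≠ (b : Fin (n + 1)) := cast_ne han hbn hab
  have := inv_mem hP
  rwa [c3_inv, c3_rot dab.symm d1a.symm d1b.symm, c3_rot d1a.symm d1b dab] at this

lemma P23 (hn : 5 ≤ n) :
    c3 (1 : Fin (n + 1)) ((2 : ℕ) : Fin (n + 1)) ((3 : ℕ) : Fin (n + 1)) ∈
      Subgroup.closure (genSet n) := by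
  have h24 := edge_mem hn (i := 2) (by norm_num) (by omega)
  have h35 := edge_mem hn (i := 3) (by norm_num) (by omega)
  norm_num at h24 h35
  -- distinctness facts among 1,2,3,4,5
  have d12 : (1 : Fin (n + 1)) ≠ ((2 : ℕ) : Fin (n + 1)) := one_ne_c (le_refl 2) (by omega)
  have d13 : (1 : Fin (n + 1)) ≠ ((3 : ℕ) : Fin (n + 1)) := one_ne_c (by norm_num) (by omega)
  have d14 : (1 : Fin (n + 1)) ≠ ((4 : ℕ) : Fin (n + 1)) := one_ne_c (by norm_num) (by omega)
  have d15 : (1 : Fin (n + 1)) ≠ ((5 : ℕ) : Fin (n + 1)) := one_ne_c (by norm_num) (by omega)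
  have cne : ∀ a b : ℕ, a ≤ 5 → b ≤ 5 → a ≠ b →
      ((a : ℕ) : Fin (n + 1)) ≠ ((b : ℕ) : Fin (n + 1)) :=
    fun a b ha hb h => cast_ne (by omega) (by omega) h
  -- conjugation: (1 2 4) (1 3 5) (1 2 4)⁻¹ = (2 3 5)
  have hconj := c3_conj (c3 (1 : Fin (n + 1)) ((2 : ℕ) : Fin (n + 1)) ((4 : ℕ) : Fin (n + 1)))
    (1 : Fin (n + 1)) ((3 : ℕ) : Fin (n + 1)) ((5 : ℕ) : Fin (n + 1))
  rw [c3_a d12 d14,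
    c3_ne d13.symm (cne 3 2 (by norm_num) (by norm_num) (by norm_num))
      (cne 3 4 (by norm_num) (by norm_num) (by norm_num)),
    c3_ne d15.symm (cne 5 2 (by norm_num) (by norm_num) (by norm_num))
      (cne 5 4 (by norm_num) (by norm_num) (by norm_num))] at hconj
  have h235 : c3 ((2 : ℕ) : Fin (n + 1)) ((3 : ℕ) : Fin (n + 1)) ((5 : ℕ) : Fin (n + 1)) ∈
      Subgroup.closure (genSet n) := by
    rw [← hconj]
    exact mul_mem (mul_mem h24 h35) (inv_mem h24)
  have hdec := c3_decomp (d := (1 : Fin (n + 1))) d12 d13 d15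
    (cne 2 3 (by norm_num) (by norm_num) (by norm_num))
    (cne 3 5 (by norm_num) (by norm_num) (by norm_num))
    (cne 2 5 (by norm_num) (by norm_num) (by norm_num))
  have : c3 ((2 : ℕ) : Fin (n + 1)) ((3 : ℕ) : Fin (n + 1)) ((5 : ℕ) : Fin (n + 1)) *
      (c3 (1 : Fin (n + 1)) ((3 : ℕ) : Fin (n + 1)) ((5 : ℕ) : Fin (n + 1)))⁻¹ ∈
      Subgroup.closure (genSet n) := mul_mem h235 (inv_mem h35)
  rwa [← hdec, mul_inv_cancel_right] at this

lemma P2 (hn : 5 ≤ n) : ∀ a : ℕ, 3 ≤ a → a ≤ n →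
    c3 (1 : Fin (n + 1)) ((2 : ℕ) : Fin (n + 1)) ((a : ℕ) : Fin (n + 1)) ∈
      Subgroup.closure (genSet n) := by
  intro a
  induction a using Nat.strong_induction_on with
  | _ a ih =>
    intro h3 han
    rcases Nat.lt_or_ge a 5 with h5 | h5
    · interval_cases a
      · exact P23 hn
      · have := edge_mem hn (i := 2) (le_refl 2) (by omega)
        norm_num at this ⊢
        exact this
    · -- a ≥ 5 : combine P2 (a-2) with edge (a-2, a)
      have hih := ih (a - 2) (by omega) (by omega) (by omega)
      have hedge := edge_mem hn (i := a - 2) (by omega) (by omega)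
      have hcast : ((a - 2 + 2 : ℕ) : Fin (n + 1)) = ((a : ℕ) : Fin (n + 1)) := by
        congr 1; omega
      rw [hcast] at hedge
      have htr := c3_trans (d := (1 : Fin (n + 1)))
        (a := ((a - 2 : ℕ) : Fin (n + 1))) (b := ((a : ℕ) : Fin (n + 1)))
        (c := ((2 : ℕ) : Fin (n + 1)))
        (one_ne_c (by omega) (by omega)) (one_ne_c (by omega) (by omega))
        (one_ne_c (by omega) (by omega))
        (cast_ne (by omega) (by omega) (by omega))
        (cast_ne (by omega) (by omega) (by omega))
        (cast_ne (by omega) (by omega) (by omega))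
      rw [← htr]
      exact mul_mem hedge hih

lemma keyP (hn : 5 ≤ n) {a b : ℕ} (h2a : 2 ≤ a) (han : a ≤ n) (h2b : 2 ≤ b) (hbn : b ≤ n)
    (hab : a ≠ b) :
    c3 (1 : Fin (n + 1)) (a : Fin (n + 1)) (b : Fin (n + 1)) ∈ Subgroup.closure (genSet n) := by
  rcases eq_or_ne a 2 with rfl | ha2
  · exact P2 hn b (by omega) hbn
  rcases eq_or_ne b 2 with rfl | hb2
  · exact P_symm (by omega) hbn h2a han (by omega) (P2 hn a (by omega) han)
  · have hPa : c3 (1 : Fin (n + 1)) ((a : ℕ) : Fin (n + 1)) ((2 : ℕ) : Fin (n + 1)) ∈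
        Subgroup.closure (genSet n) :=
      P_symm (by omega) (by omega) h2a han (by omega) (P2 hn a (by omega) han)
    have hPb := P2 hn b (by omega) hbn
    have htr := c3_trans (d := (1 : Fin (n + 1)))
      (a := ((2 : ℕ) : Fin (n + 1))) (b := ((b : ℕ) : Fin (n + 1)))
      (c := ((a : ℕ) : Fin (n + 1)))
      (one_ne_c (by omega) (by omega)) (one_ne_c h2b hbn) (one_ne_c h2a han)
      (cast_ne (by omega) hbn (by omega))
      (cast_ne hbn han (by omega))
      (cast_ne (by omega) han (by omega))
    rw [← htr]
    exact mul_mem hPb hPa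

lemma val_ge_two {x : Fin (n + 1)} (hn : 1 ≤ n) (h0 : x ≠ 0) (h1 : x ≠ 1) :
    2 ≤ (x : ℕ) := by
  have hv0 : (x : ℕ) ≠ 0 := fun h => h0 (Fin.ext (by simpa using h))
  have hv1 : (x : ℕ) ≠ 1 := by
    intro h
    apply h1
    apply Fin.ext
    rw [h, val_one', Nat.mod_eq_of_lt (by omega)]
  omega

lemma all3 (hn : 5 ≤ n) {a b c : Fin (n + 1)} (ha : a ≠ 0) (hb : b ≠ 0) (hc : c ≠ 0)
    (hab : a ≠ b) (hbc : b ≠ c) (hac : a ≠ c) :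
    c3 a b c ∈ Subgroup.closure (genSet n) := by
  have hva : (a : ℕ) ≤ n := Nat.lt_succ_iff.mp a.isLt
  have hvb : (b : ℕ) ≤ n := Nat.lt_succ_iff.mp b.isLt
  have hvc : (c : ℕ) ≤ n := Nat.lt_succ_iff.mp c.isLt
  have hcasta : (((a : ℕ) : ℕ) : Fin (n + 1)) = a := Fin.cast_val_eq_self a
  have hcastb : (((b : ℕ) : ℕ) : Fin (n + 1)) = b := Fin.cast_val_eq_self b
  have hcastc : (((c : ℕ) : ℕ) : Fin (n + 1)) = c := Fin.cast_val_eq_self c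
  have hvab : (a : ℕ) ≠ (b : ℕ) := fun h => hab (Fin.ext h)
  have hvbc : (b : ℕ) ≠ (c : ℕ) := fun h => hbc (Fin.ext h)
  have hvac : (a : ℕ) ≠ (c : ℕ) := fun h => hac (Fin.ext h)
  rcases eq_or_ne a 1 with rfl | ha1
  · -- c3 1 b c
    have h2b := val_ge_two (by omega) hb (Ne.symm hab)
    have h2c := val_ge_two (by omega) hc (Ne.symm hac)
    have := keyP hn h2b hvb h2c hvc hvbc
    rwa [hcastb, hcastc] at this
  rcases eq_or_ne b 1 with rfl | hb1
  · -- c3 a 1 c = c3 1 c a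
    have h2a := val_ge_two (by omega) ha hab
    have h2c := val_ge_two (by omega) hc hbc.symm
    have := keyP hn h2c hvc h2a hva hvac.symm
    rw [hcastc, hcasta] at this
    rwa [c3_rot hab hbc hac]
  rcases eq_or_ne c 1 with rfl | hc1
  · -- c3 a b 1 = c3 1 a b
    have h2a := val_ge_two (by omega) ha ha1
    have h2b := val_ge_two (by omega) hb hb1
    have := keyP hn h2a hva h2b hvb hvab
    rw [hcasta, hcastb] at this
    rwa [c3_rot hab hbc hac, c3_rot hbc hac.symm hab.symm]
  · -- none is 1 : c3 a b c = c3 1 a b * c3 1 b c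
    have h2a := val_ge_two (by omega) ha ha1
    have h2b := val_ge_two (by omega) hb hb1
    have h2c := val_ge_two (by omega) hc hc1
    have h1 := keyP hn h2a hva h2b hvb hvab
    have h2 := keyP hn h2b hvb h2c hvc hvbc
    rw [hcasta, hcastb] at h1
    rw [hcastb, hcastc] at h2
    rw [← c3_decomp (d := (1 : Fin (n + 1))) (Ne.symm ha1) (Ne.symm hb1) (Ne.symm hc1)
      hab hbc hac]
    exact mul_mem h1 h2

lemma main_aux (hn : 5 ≤ n) : ∀ (k : ℕ) (σ : Equiv.Perm (Fin (n + 1))),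
    σ.support.card ≤ k → Equiv.Perm.sign σ = 1 → σ 0 = 0 →
    σ ∈ Subgroup.closure (genSet n) := by
  intro k
  induction k with
  | zero =>
    intro σ hcard _ _
    have : σ.support = ∅ := Finset.card_eq_zero.1 (Nat.le_antisymm hcard (Nat.zero_le _))
    rw [Equiv.Perm.support_eq_empty_iff.1 this]
    exact one_mem _
  | succ k ih =>
    intro σ hcard hsign h0
    by_cases hσ1 : σ = 1
    · rw [hσ1]; exact one_mem _
    obtain ⟨a, ha⟩ : ∃ a, σ a ≠ a := by
      by_contra h
      push_neg at h
      exact hσ1 (Equiv.ext h)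
    set b := σ a with hbdef
    have hba : b ≠ a := ha
    have hsb : σ b ≠ b := fun h => ha (σ.injective (show σ b = σ a from h.trans hbdef))
    have hamem : a ∈ σ.support := Equiv.Perm.mem_support.2 ha
    have hbmem : b ∈ σ.support := Equiv.Perm.mem_support.2 hsb
    have hcard2 : σ.support.card ≠ 2 := by
      intro hc
      obtain ⟨x, y, hxy, hs⟩ := Equiv.Perm.card_support_eq_two.1 hc
      rw [hs, Equiv.Perm.sign_swap hxy] at hsign
      exact absurd hsign (by decide)
    have hcard3 : 3 ≤ σ.support.card := by
      have h2 := Equiv.Perm.one_lt_card_support_of_ne_one hσ1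
      omega
    obtain ⟨t, htmem, hta, htb⟩ : ∃ t, t ∈ σ.support ∧ t ≠ a ∧ t ≠ b := by
      have hne : (σ.support \ {a, b}).Nonempty := by
        rw [← Finset.card_pos]
        have h1 := Finset.le_card_sdiff ({a, b} : Finset (Fin (n + 1))) σ.support
        have h2 : ({a, b} : Finset (Fin (n + 1))).card ≤ 2 :=
          le_trans (Finset.card_insert_le a {b}) (by simp)
        omega
      obtain ⟨t, ht⟩ := hne
      rw [Finset.mem_sdiff, Finset.mem_insert, Finset.mem_singleton] at ht
      exact ⟨t, ht.1, fun h => ht.2 (Or.inl h), fun h => ht.2 (Or.inr h)⟩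
    have h0nsupp : (0 : Fin (n + 1)) ∉ σ.support := by
      rw [Equiv.Perm.mem_support]
      simpa using h0
    have ha0 : a ≠ 0 := fun h => h0nsupp (h ▸ hamem)
    have hb0 : b ≠ 0 := fun h => h0nsupp (h ▸ hbmem)
    have ht0 : t ≠ 0 := fun h => h0nsupp (h ▸ htmem)
    have hat : a ≠ t := hta.symm
    have hbt : b ≠ t := htb.symm
    set π := c3 b a t with hπdef
    have hπmem : π ∈ Subgroup.closure (genSet n) := all3 hn hb0 ha0 ht0 hba hat hbt
    have hπa : (π * σ) a = a := by
      rw [Equiv.Perm.mul_apply, ← hbdef]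
      exact c3_a hba hbt
    have hsub : (π * σ).support ⊆ σ.support.erase a := by
      intro x hx
      rw [Finset.mem_erase]
      constructor
      · intro hxa
        rw [hxa] at hx
        exact Equiv.Perm.mem_support.1 hx hπa
      · by_contra hxs
        have hfix : σ x = x := Equiv.Perm.notMem_support.1 hxs
        have hxb : x ≠ b := fun h => hxs (h ▸ hbmem)
        have hxa : x ≠ a := fun h => hxs (h ▸ hamem)
        have hxt : x ≠ t := fun h => hxs (h ▸ htmem)
        have : (π * σ) x = x := by
          rw [Equiv.Perm.mul_apply, hfix]
          exact c3_ne hxb hxa hxt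
        exact Equiv.Perm.mem_support.1 hx this
    have hcardlt : (π * σ).support.card < σ.support.card :=
      lt_of_le_of_lt (Finset.card_le_card hsub) (Finset.card_erase_lt_of_mem hamem)
    have hπσ : π * σ ∈ Subgroup.closure (genSet n) := by
      apply ih (π * σ) (by omega)
      · rw [map_mul, c3_sign hba hat, hsign, one_mul]
      · rw [Equiv.Perm.mul_apply, h0]
        exact c3_ne hb0.symm ha0.symm ht0.symm
    have : σ = π⁻¹ * (π * σ) := by rw [inv_mul_cancel_left]
    rw [this]
    exact mul_mem (inv_mem hπmem) hπσ

theorem stmt1 (n : ℕ) (hn : 5 ≤ n) (σ : Equiv.Perm (Fin (n + 1))) :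
    σ ∈ Subgroup.closure
      { c : Equiv.Perm (Fin (n + 1)) |
        ∃ i : ℕ, 2 ≤ i ∧ i + 2 ≤ n ∧
          c 1 = (i : Fin (n + 1)) ∧ c (i : Fin (n + 1)) = ((i + 2 : ℕ) : Fin (n + 1)) ∧
          c ((i + 2 : ℕ) : Fin (n + 1)) = 1 ∧
          ∀ x : Fin (n + 1), x ≠ 1 → x ≠ (i : Fin (n + 1)) →
            x ≠ ((i + 2 : ℕ) : Fin (n + 1)) → c x = x } ↔
    (Equiv.Perm.sign σ = 1 ∧ σ 0 = 0) := by
  show σ ∈ Subgroup.closure (genSet n) ↔ _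
  constructor
  · intro h
    let K : Subgroup (Equiv.Perm (Fin (n + 1))) :=
      { carrier := { τ | Equiv.Perm.sign τ = 1 ∧ τ 0 = 0 }
        one_mem' := by simp
        mul_mem' := by
          rintro x y ⟨hx1, hx2⟩ ⟨hy1, hy2⟩
          exact ⟨by rw [map_mul, hx1, hy1, one_mul],
            by rw [Equiv.Perm.mul_apply, hy2, hx2]⟩
        inv_mem' := by
          rintro x ⟨hx1, hx2⟩
          exact ⟨by rw [map_inv, hx1, inv_one],
            by rw [← hx2, ← Equiv.Perm.mul_apply, inv_mul_cancel, Equiv.Perm.one_apply, hx2]⟩ }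
    have hsub : genSet n ⊆ K := by
      intro c hc
      obtain ⟨i, h2, hin, rfl⟩ := gen_eq hc
      constructor
      · exact c3_sign (one_ne_c h2 (by omega)) (cast_ne (by omega) (by omega) (by omega))
      · exact c3_ne (fin_zero_ne_one (by omega)) (zero_ne_c (by omega) (by omega))
          (zero_ne_c (by omega) (by omega))
    exact (Subgroup.closure_le K).2 hsub h
  · rintro ⟨h1, h2⟩
    exact main_aux hn σ.support.card σ le_rfl h1 h2
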